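/- For any finite multiset A of nonnegative reals, any nonnegative real b, and any integer k ≥ 1, Ψ_k(A ∪ {b}) ≤ (Ψ_k(A)^{1/k} + Ψ_k({b})^{1/k})^k. -/

import Mathlib

open MeasureTheory Set
open scoped ENNReal

/-- Complete homogeneous sum: sum of all monomials of total degree `k` (with
repetition) in the elements of the list. -/
noncomputable def hcomp : List ℝ → ℕ → ℝ
  | _, 0 => 1
  | [], _ + 1 => 0
  | a :: l, k + 1 => a * hcomp (a :: l) k + hcomp l (k + 1)
  termination_by l k => (l.length, k)

/-- `Ψ_k(A)`: `k!` times the sum of all monomials of total degree `k` in the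
elements of `A`. -/
noncomputable def Psi (k : ℕ) (A : List ℝ) : ℝ := (k.factorial : ℝ) * hcomp A k

lemma hcomp_zero (l : List ℝ) : hcomp l 0 = 1 := by cases l <;> rw [hcomp]
lemma hcomp_nil_succ (k : ℕ) : hcomp [] (k+1) = 0 := by rw [hcomp]
lemma hcomp_cons_succ (a : ℝ) (l : List ℝ) (k : ℕ) :
    hcomp (a :: l) (k+1) = a * hcomp (a :: l) k + hcomp l (k + 1) := by rw [hcomp]

lemma hcomp_nonneg (l : List ℝ) (hl : ∀ a ∈ l, 0 ≤ a) : ∀ k, 0 ≤ hcomp l k := by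
  induction l with
  | nil =>
    intro k; cases k with
    | zero => simp [hcomp_zero]
    | succ k => simp [hcomp_nil_succ]
  | cons a l ih =>
    intro k
    induction k with
    | zero => simp [hcomp_zero]
    | succ k ihk =>
      rw [hcomp_cons_succ]
      have ha : 0 ≤ a := hl a (by simp)
      have h2 := ih (fun x hx => hl x (List.mem_cons_of_mem _ hx)) (k+1)
      have := mul_nonneg ha ihk
      linarith

lemma Psi_nonneg (k : ℕ) (A : List ℝ) (hA : ∀ a ∈ A, 0 ≤ a) : 0 ≤ Psi k A :=
  mul_nonneg (by positivity) (hcomp_nonneg A hA k)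

lemma hcomp_single (b : ℝ) (k : ℕ) : hcomp [b] k = b ^ k := by
  induction k with
  | zero => simp [hcomp_zero]
  | succ k ih => rw [hcomp_cons_succ, hcomp_nil_succ, ih]; ring

lemma Psi_single (b : ℝ) (k : ℕ) : Psi k [b] = (k.factorial : ℝ) * b ^ k := by
  rw [Psi, hcomp_single]

lemma hcomp_cons (b : ℝ) (A : List ℝ) (k : ℕ) :
    hcomp (b :: A) k = ∑ j ∈ Finset.range (k+1), b ^ j * hcomp A (k - j) := by
  induction k with
  | zero => simp [hcomp_zero]
  | succ k ih =>
    rw [hcomp_cons_succ, ih, Finset.sum_range_succ' _ (k+1)]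
    rw [Finset.mul_sum]
    simp only [pow_zero, one_mul, Nat.sub_zero]
    congr 1
    refine Finset.sum_congr rfl fun j hj => ?_
    have : k + 1 - (j + 1) = k - j := by omega
    rw [this]; ring

lemma Psi_cons (b : ℝ) (A : List ℝ) (k : ℕ) :
    Psi k (b :: A) = ∑ j ∈ Finset.range (k+1),
      (k.choose j : ℝ) * ((j.factorial : ℝ) * b ^ j) * Psi (k - j) A := by
  rw [Psi, hcomp_cons, Finset.mul_sum]
  refine Finset.sum_congr rfl fun j hj => ?_
  have hjk : j ≤ k := by simpa [Nat.lt_succ_iff] using hj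
  rw [Psi]
  have : (k.factorial : ℝ) = (k.choose j : ℝ) * (j.factorial : ℝ) * ((k - j).factorial : ℝ) := by
    rw [← Nat.cast_mul, ← Nat.cast_mul, Nat.choose_mul_factorial_mul_factorial hjk]
  rw [this]; ring

/-- The exponential distribution with rate 1. -/
noncomputable def expM : Measure ℝ :=
  (volume.restrict (Ioi (0:ℝ))).withDensity fun x => ENNReal.ofReal (Real.exp (-x))

lemma expM_moment (j : ℕ) :
    ∫⁻ x, (ENNReal.ofReal x) ^ j ∂expM = ENNReal.ofReal (j.factorial : ℝ) := by
  have hmeas : Measurable fun x : ℝ => ENNReal.ofReal (Real.exp (-x)) :=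
    (Real.continuous_exp.comp continuous_neg).measurable.ennreal_ofReal
  have hg : Measurable fun x : ℝ => (ENNReal.ofReal x) ^ j :=
    ENNReal.measurable_ofReal.pow_const j
  rw [expM, lintegral_withDensity_eq_lintegral_mul _ hmeas hg]
  simp only [Pi.mul_apply]
  have h1 : ∫⁻ x in Ioi (0:ℝ), ENNReal.ofReal (Real.exp (-x)) * (ENNReal.ofReal x) ^ j
      = ∫⁻ x in Ioi (0:ℝ), ENNReal.ofReal (Real.exp (-x) * x ^ j) := by
    refine setLIntegral_congr_fun measurableSet_Ioi (fun x hx => ?_)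
    rw [ENNReal.ofReal_mul (Real.exp_nonneg _), ENNReal.ofReal_pow (le_of_lt hx)]
  rw [h1]
  have hint : IntegrableOn (fun x : ℝ => Real.exp (-x) * x ^ j) (Ioi 0) := by
    have := Real.GammaIntegral_convergent (s := (j:ℝ) + 1) (by positivity)
    refine this.congr_fun (fun x hx => ?_) measurableSet_Ioi
    beta_reduce; rw [show ((j:ℝ) + 1 - 1) = (j:ℝ) by ring, Real.rpow_natCast]
  rw [← ofReal_integral_eq_lintegral_ofReal hint
      ((ae_restrict_iff' measurableSet_Ioi).2 (ae_of_all _ fun x hx =>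
        mul_nonneg (Real.exp_nonneg _) (pow_nonneg (le_of_lt hx) _)))]
  congr 1
  have h2 := Real.Gamma_eq_integral (s := (j:ℝ) + 1) (by positivity)
  rw [Real.Gamma_nat_eq_factorial] at h2
  rw [h2]
  refine setIntegral_congr_fun measurableSet_Ioi fun x hx => ?_
  rw [show ((j:ℝ) + 1 - 1) = (j:ℝ) by ring, Real.rpow_natCast]

instance : IsProbabilityMeasure expM := by
  constructor
  have := expM_moment 0
  simpa using this

lemma step {Ω : Type} [MeasurableSpace Ω] (μ : Measure Ω) [IsProbabilityMeasure μ]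
    (X : Ω → ℝ≥0∞) (hX : Measurable X) (A : List ℝ) (hA : ∀ a ∈ A, 0 ≤ a)
    (hmom : ∀ m, ∫⁻ ω, X ω ^ m ∂μ = ENNReal.ofReal (Psi m A))
    (b : ℝ) (hb : 0 ≤ b) (k : ℕ) :
    ∫⁻ p : ℝ × Ω, (ENNReal.ofReal b * ENNReal.ofReal p.1 + X p.2) ^ k ∂(expM.prod μ)
      = ENNReal.ofReal (Psi k (b :: A)) := by
  have hYm : Measurable fun x : ℝ => ENNReal.ofReal b * ENNReal.ofReal x :=
    ENNReal.measurable_ofReal.const_mul _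
  have expand : ∀ p : ℝ × Ω,
      (ENNReal.ofReal b * ENNReal.ofReal p.1 + X p.2) ^ k
      = ∑ j ∈ Finset.range (k+1),
          (ENNReal.ofReal b * ENNReal.ofReal p.1) ^ j * (X p.2) ^ (k - j)
            * (k.choose j : ℝ≥0∞) :=
    fun p => add_pow _ _ _
  rw [lintegral_congr expand]
  rw [lintegral_finset_sum _ (fun j _ => by
    exact (((hYm.comp measurable_fst).pow_const j).mul
      ((hX.comp measurable_snd).pow_const (k - j))).mul_const _)]
  rw [Psi_cons, ENNReal.ofReal_sum_of_nonneg (fun j hj =>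
    mul_nonneg (mul_nonneg (by positivity) (by positivity)) (Psi_nonneg _ _ hA))]
  refine Finset.sum_congr rfl fun j hj => ?_
  rw [lintegral_mul_const _ (by
    exact ((hYm.comp measurable_fst).pow_const j).mul
      ((hX.comp measurable_snd).pow_const (k - j)))]
  rw [lintegral_prod_mul ((hYm.pow_const j).aemeasurable)
      ((hX.pow_const (k - j)).aemeasurable)]
  have hYj : ∫⁻ x, (ENNReal.ofReal b * ENNReal.ofReal x) ^ j ∂expM
      = (ENNReal.ofReal b) ^ j * ENNReal.ofReal (j.factorial : ℝ) := by
    simp_rw [mul_pow]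
    rw [lintegral_const_mul _ (ENNReal.measurable_ofReal.pow_const j), expM_moment j]
  rw [hYj, hmom (k - j)]
  rw [ENNReal.ofReal_mul (mul_nonneg (by positivity) (by positivity)),
    ENNReal.ofReal_mul (by positivity : (0:ℝ) ≤ (k.choose j : ℝ)),
    ENNReal.ofReal_mul (by positivity : (0:ℝ) ≤ (j.factorial : ℝ)),
    ENNReal.ofReal_pow hb]
  simp only [ENNReal.ofReal_natCast]
  ring

lemma exists_rep (A : List ℝ) (hA : ∀ a ∈ A, 0 ≤ a) :
    ∃ (Ω : Type) (_ : MeasurableSpace Ω) (μ : Measure Ω) (X : Ω → ℝ≥0∞),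
      IsProbabilityMeasure μ ∧ Measurable X ∧
      ∀ m, ∫⁻ ω, X ω ^ m ∂μ = ENNReal.ofReal (Psi m A) := by
  induction A with
  | nil =>
    refine ⟨Unit, ⊤, Measure.dirac (), fun _ => 0, by infer_instance, measurable_const,
      fun m => ?_⟩
    cases m with
    | zero => simp [Psi, hcomp_zero]
    | succ m => simp [Psi, hcomp_nil_succ]
  | cons a A ih =>
    obtain ⟨Ω, mΩ, μ, X, hprob, hX, hmom⟩ := ih (fun x hx => hA x (List.mem_cons_of_mem _ hx))
    have ha : 0 ≤ a := hA a (by simp)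
    refine ⟨ℝ × Ω, by infer_instance,
      expM.prod μ, fun p => ENNReal.ofReal a * ENNReal.ofReal p.1 + X p.2,
      by infer_instance,
      ((ENNReal.measurable_ofReal.comp measurable_fst).const_mul _).add
        (hX.comp measurable_snd),
      fun m => step μ X hX A (fun x hx => hA x (List.mem_cons_of_mem _ hx)) hmom a ha m⟩

theorem stmt_8 (k : ℕ) (hk : 1 ≤ k) (A : List ℝ) (hA : ∀ a ∈ A, 0 ≤ a)
    (b : ℝ) (hb : 0 ≤ b) :
    Psi k (b :: A) ≤ (Psi k A ^ (1 / (k : ℝ)) + Psi k [b] ^ (1 / (k : ℝ))) ^ k := by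
  obtain ⟨Ω, mΩ, μ, X, hprob, hX, hmom⟩ := exists_rep A hA
  have hkR : (0:ℝ) < (k:ℝ) := by exact_mod_cast hk
  set ν := expM.prod μ with hν
  set f : ℝ × Ω → ℝ≥0∞ := fun p => ENNReal.ofReal b * ENNReal.ofReal p.1 with hf
  set g : ℝ × Ω → ℝ≥0∞ := fun p => X p.2 with hg
  have hfm : Measurable f := (ENNReal.measurable_ofReal.comp measurable_fst).const_mul _
  have hgm : Measurable g := hX.comp measurable_snd
  -- moments of the three functions
  have hsum : ∫⁻ p, (f p + g p) ^ k ∂ν = ENNReal.ofReal (Psi k (b :: A)) :=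
    step μ X hX A hA hmom b hb k
  have hfk : ∫⁻ p, f p ^ k ∂ν = ENNReal.ofReal (Psi k [b]) := by
    have h1 : ∀ p : ℝ × Ω, f p ^ k
        = (fun x : ℝ => (ENNReal.ofReal b * ENNReal.ofReal x) ^ k) p.1
          * (fun _ : Ω => (1:ℝ≥0∞)) p.2 := fun p => by simp [hf]
    rw [lintegral_congr h1, lintegral_prod_mul
      (((ENNReal.measurable_ofReal.const_mul _).pow_const k).aemeasurable)
      aemeasurable_const]
    simp only [lintegral_one, measure_univ, mul_one]
    simp_rw [mul_pow]
    rw [lintegral_const_mul _ (ENNReal.measurable_ofReal.pow_const k), expM_moment k]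
    rw [Psi_single, ENNReal.ofReal_mul (by positivity), ENNReal.ofReal_pow hb]
    ring
  have hgk : ∫⁻ p, g p ^ k ∂ν = ENNReal.ofReal (Psi k A) := by
    have h1 : ∀ p : ℝ × Ω, g p ^ k
        = (fun _ : ℝ => (1:ℝ≥0∞)) p.1 * (fun ω : Ω => X ω ^ k) p.2 := fun p => by simp [hg]
    rw [lintegral_congr h1, lintegral_prod_mul aemeasurable_const
      ((hX.pow_const k).aemeasurable)]
    simp only [lintegral_one, measure_univ, one_mul]
    exact hmom k
  -- Minkowski's inequality
  have mk := ENNReal.lintegral_Lp_add_le (μ := ν) (p := (k:ℝ))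
    hfm.aemeasurable hgm.aemeasurable (by exact_mod_cast hk)
  have hrw : ∀ (F : ℝ × Ω → ℝ≥0∞), ∫⁻ a, F a ^ (k:ℝ) ∂ν = ∫⁻ a, F a ^ k ∂ν := by
    intro F; apply lintegral_congr; intro a; rw [ENNReal.rpow_natCast]
  rw [hrw, hrw, hrw] at mk
  simp only [Pi.add_apply] at mk
  rw [hsum, hfk, hgk] at mk
  -- raise both sides to the k-th power
  have key : ENNReal.ofReal (Psi k (b :: A))
      ≤ (ENNReal.ofReal (Psi k [b]) ^ (1/(k:ℝ)) + ENNReal.ofReal (Psi k A) ^ (1/(k:ℝ)))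
          ^ (k:ℝ) := by
    have h := ENNReal.rpow_le_rpow mk (le_of_lt hkR)
    rwa [← ENNReal.rpow_mul, one_div_mul_cancel (ne_of_gt hkR),
      ENNReal.rpow_one] at h
  -- convert back to reals
  have e1 : ENNReal.ofReal (Psi k A) ^ (1/(k:ℝ))
      = ENNReal.ofReal (Psi k A ^ (1/(k:ℝ))) := by
    rw [← ENNReal.ofReal_rpow_of_nonneg (Psi_nonneg k A hA) (by positivity)]
  have e2 : ENNReal.ofReal (Psi k [b]) ^ (1/(k:ℝ))
      = ENNReal.ofReal (Psi k [b] ^ (1/(k:ℝ))) := by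
    rw [← ENNReal.ofReal_rpow_of_nonneg
      (Psi_nonneg k [b] (by simpa using hb)) (by positivity)]
  have hpA : (0:ℝ) ≤ Psi k A ^ (1/(k:ℝ)) := Real.rpow_nonneg (Psi_nonneg k A hA) _
  have hpb : (0:ℝ) ≤ Psi k [b] ^ (1/(k:ℝ)) :=
    Real.rpow_nonneg (Psi_nonneg k [b] (by simpa using hb)) _
  rw [e1, e2, add_comm (ENNReal.ofReal (Psi k [b] ^ (1/(k:ℝ)))),
    ← ENNReal.ofReal_add hpA hpb] at key
  have hy : (0:ℝ) ≤ Psi k A ^ (1/(k:ℝ)) + Psi k [b] ^ (1/(k:ℝ)) := add_nonneg hpA hpb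
  rw [ENNReal.ofReal_rpow_of_nonneg hy (le_of_lt hkR)] at key
  rw [Real.rpow_natCast] at key
  exact (ENNReal.ofReal_le_ofReal_iff (pow_nonneg hy k)).1 key
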